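/- Solvability of the discrete Lyapunov equation for Schur matrices: let A ∈ ℝ^{n×n} be such that every complex eigenvalue of A has modulus strictly less than 1, and let M ∈ ℝ^{n×n} be symmetric positive definite. Then the series P := Σ_{k=0}^∞ (Aᵀ)^k M A^k converges, P is symmetric positive definite, and AᵀPA − P = −M. -/

import Mathlib

noncomputable section
open Matrix Filter

section Aux
open scoped ENNReal NNReal

attribute [local instance] Matrix.linftyOpNormedRing Matrix.linftyOpNormedAlgebra

variable {n : ℕ}

private lemma nnnorm_map_ofReal (B : Matrix (Fin n) (Fin n) ℝ) :
    ‖B.map (Complex.ofReal : ℝ → ℂ)‖₊ = ‖B‖₊ := by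
  simp [Matrix.linfty_opNNNorm_def, Matrix.map_apply]

private lemma spectrum_transpose_subset (B : Matrix (Fin n) (Fin n) ℂ) :
    spectrum ℂ Bᵀ ⊆ spectrum ℂ B := by
  intro μ hμ
  rw [spectrum.mem_iff, Matrix.isUnit_iff_isUnit_det] at hμ ⊢
  have h : algebraMap ℂ (Matrix (Fin n) (Fin n) ℂ) μ - Bᵀ
      = (algebraMap ℂ (Matrix (Fin n) (Fin n) ℂ) μ - B)ᵀ := by
    rw [Matrix.transpose_sub, Algebra.algebraMap_eq_smul_one, Matrix.transpose_smul,
      Matrix.transpose_one]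
  rw [h, Matrix.det_transpose] at hμ
  exact hμ

private lemma entry_nnnorm_le (B : Matrix (Fin n) (Fin n) ℝ) (i j : Fin n) :
    ‖B i j‖₊ ≤ ‖B‖₊ := by
  rw [Matrix.linfty_opNNNorm_def]
  refine le_trans ?_ (Finset.le_sup (Finset.mem_univ i))
  exact Finset.single_le_sum (f := fun j' => ‖B i j'‖₊) (fun _ _ => zero_le) (Finset.mem_univ j)

private lemma pow_bound (B : Matrix (Fin n) (Fin n) ℝ) (hn : 0 < n)
    (h : ∀ μ ∈ spectrum ℂ (B.map (Complex.ofReal : ℝ → ℂ)), ‖μ‖₊ < 1) :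
    ∃ r : ℝ≥0, r < 1 ∧ ∃ N : ℕ, ∀ k ≥ N, ‖B ^ k‖₊ ≤ r ^ k := by
  haveI : Nonempty (Fin n) := ⟨⟨0, hn⟩⟩
  set Bc := B.map (Complex.ofReal : ℝ → ℂ) with hBc
  have hrad : spectralRadius ℂ Bc < 1 := by
    have := spectrum.spectralRadius_lt_of_forall_lt (a := Bc) (r := 1) h
    simpa using this
  obtain ⟨r, hr1, hr2⟩ := ENNReal.lt_iff_exists_nnreal_btwn.mp hrad
  refine ⟨r, by exact_mod_cast hr2, ?_⟩
  have hev := (spectrum.pow_nnnorm_pow_one_div_tendsto_nhds_spectralRadius Bc).eventually_lt_const hr1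
  obtain ⟨N, hN⟩ := eventually_atTop.mp hev
  refine ⟨N + 1, fun k hk => ?_⟩
  have hk0 : k ≠ 0 := by omega
  have h1 := hN k (by omega)
  have h2 : (‖Bc ^ k‖₊ : ℝ≥0∞) ≤ (r : ℝ≥0∞) ^ k := by
    have h3 := ENNReal.rpow_le_rpow h1.le (by positivity : (0:ℝ) ≤ (k:ℝ))
    rwa [← ENNReal.rpow_mul,
      one_div, inv_mul_cancel₀ (by exact_mod_cast hk0 : (k:ℝ) ≠ 0), ENNReal.rpow_one,
      ENNReal.rpow_natCast] at h3
  have h3 : ‖Bc ^ k‖₊ ≤ r ^ k := by exact_mod_cast h2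
  have h4 : Bc ^ k = (B ^ k).map (Complex.ofReal : ℝ → ℂ) := by
    have := map_pow (Complex.ofRealHom.mapMatrix) B k
    simp only [RingHom.mapMatrix_apply] at this
    exact this.symm
  rwa [h4, nnnorm_map_ofReal] at h3

private lemma aux_entry_bound (A M : Matrix (Fin n) (Fin n) ℝ) (hn : 0 < n)
    (hA' : ∀ μ ∈ spectrum ℂ (A.map (Complex.ofReal : ℝ → ℂ)), ‖μ‖₊ < 1) :
    ∃ C : ℝ, ∃ q : ℝ≥0, (q : ℝ) < 1 ∧ ∃ N : ℕ, ∀ k ≥ N, ∀ i j,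
      |((Aᵀ) ^ k * M * A ^ k) i j| ≤ C * (q : ℝ) ^ k := by
  obtain ⟨r₁, hr₁, N₁, hN₁⟩ := pow_bound A hn hA'
  have hAT' : ∀ μ ∈ spectrum ℂ (Aᵀ.map (Complex.ofReal : ℝ → ℂ)), ‖μ‖₊ < 1 := by
    intro μ hμ
    refine hA' μ (spectrum_transpose_subset _ ?_)
    rwa [Matrix.transpose_map] at hμ
  obtain ⟨r₂, hr₂, N₂, hN₂⟩ := pow_bound Aᵀ hn hAT'
  set r : ℝ≥0 := max r₁ r₂ with hr_def
  have hr : r < 1 := max_lt hr₁ hr₂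
  refine ⟨‖M‖, r * r, ?_, max N₁ N₂, fun k hk i j => ?_⟩
  · have : r * r < 1 := by
      calc r * r ≤ r * 1 := mul_le_mul' le_rfl hr.le
        _ = r := mul_one r
        _ < 1 := hr
    exact_mod_cast this
  have b1 : ‖A ^ k‖₊ ≤ r ^ k :=
    (hN₁ k (le_trans (le_max_left _ _) hk)).trans
      (pow_le_pow_left₀ zero_le (le_max_left _ _) k)
  have b2 : ‖(Aᵀ) ^ k‖₊ ≤ r ^ k :=
    (hN₂ k (le_trans (le_max_right _ _) hk)).trans
      (pow_le_pow_left₀ zero_le (le_max_right _ _) k)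
  have hb : ‖(Aᵀ) ^ k * M * A ^ k‖₊ ≤ r ^ k * ‖M‖₊ * r ^ k :=
    le_trans (Matrix.linfty_opNNNorm_mul _ _) <| by
      exact mul_le_mul' (le_trans (Matrix.linfty_opNNNorm_mul _ _) (mul_le_mul' b2 le_rfl)) b1
  have hentry := (entry_nnnorm_le ((Aᵀ) ^ k * M * A ^ k) i j).trans hb
  calc |((Aᵀ) ^ k * M * A ^ k) i j| ≤ ((r ^ k * ‖M‖₊ * r ^ k : ℝ≥0) : ℝ) := by
        exact_mod_cast hentry
    _ = ‖M‖ * ((r : ℝ) * r) ^ k := by push_cast; ring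
    _ = ‖M‖ * (((r * r : ℝ≥0)) : ℝ) ^ k := by push_cast; ring

end Aux

/-- Solvability of the discrete Lyapunov equation for Schur
matrices. -/
theorem discrete_lyapunov_solvability
    {n : ℕ} (A : Matrix (Fin n) (Fin n) ℝ)
    (hA : ∀ μ : ℂ, Module.End.HasEigenvalue
      (Matrix.toLin' (A.map (Complex.ofReal : ℝ → ℂ))) μ → ‖μ‖ < 1)
    (M : Matrix (Fin n) (Fin n) ℝ) (hM : M.PosDef) :
    Summable (fun k : ℕ => (Aᵀ) ^ k * M * A ^ k) ∧
    (∑' k : ℕ, (Aᵀ) ^ k * M * A ^ k).PosDef ∧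
    Aᵀ * (∑' k : ℕ, (Aᵀ) ^ k * M * A ^ k) * A - (∑' k : ℕ, (Aᵀ) ^ k * M * A ^ k) = -M := by
  rcases Nat.eq_zero_or_pos n with hn | hn
  · subst hn
    haveI : Subsingleton (Matrix (Fin 0) (Fin 0) ℝ) :=
      ⟨fun a b => by ext i j; exact i.elim0⟩
    refine ⟨?_, ⟨Subsingleton.elim _ _, fun x hx =>
      absurd (Finsupp.ext (fun i : Fin 0 => i.elim0) : x = 0) hx⟩, Subsingleton.elim _ _⟩
    have h : (fun k : ℕ => (Aᵀ) ^ k * M * A ^ k) = fun _ => 0 :=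
      funext fun k => Subsingleton.elim _ _
    rw [h]; exact summable_zero
  · have hA' : ∀ μ ∈ spectrum ℂ (A.map (Complex.ofReal : ℝ → ℂ)), ‖μ‖₊ < 1 := by
      intro μ hμ
      have h1 : Module.End.HasEigenvalue (Matrix.toLin' (A.map (Complex.ofReal : ℝ → ℂ))) μ := by
        rw [Module.End.hasEigenvalue_iff_mem_spectrum]
        have he : Matrix.toLin' (A.map (Complex.ofReal : ℝ → ℂ))
            = Matrix.toLinAlgEquiv' (A.map (Complex.ofReal : ℝ → ℂ)) := rfl
        rw [he, AlgEquiv.spectrum_eq]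
        exact hμ
      have h2 := hA μ h1
      rw [← NNReal.coe_lt_one, coe_nnnorm]
      exact h2
    obtain ⟨C, q, hq, N, hbound⟩ := aux_entry_bound A M hn hA'
    set T := fun k : ℕ => (Aᵀ) ^ k * M * A ^ k with hT
    have hsum : Summable T := by
      refine Pi.summable.mpr ?_
      intro i
      rw [Pi.summable]
      intro j
      have hg : Summable (fun k : ℕ => C * (q : ℝ) ^ k) :=
        (summable_geometric_of_lt_one q.coe_nonneg hq).mul_left C
      refine Summable.of_norm_bounded_eventually_nat hg ?_
      filter_upwards [Filter.eventually_ge_atTop N] with k hk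
      exact hbound k hk i j
    have hTps : ∀ k, (T k).PosSemidef := by
      intro k
      have h : T k = ((A ^ k)ᴴ) * M * (A ^ k) := by
        rw [Matrix.conjTranspose_eq_transpose_of_trivial, Matrix.transpose_pow]
      rw [h]
      exact hM.posSemidef.conjTranspose_mul_mul_same _
    have hT0 : T 0 = M := by simp [hT]
    have hP := hsum.hasSum
    refine ⟨hsum, Matrix.PosDef.of_dotProduct_mulVec_pos ?_ ?_, ?_⟩
    · -- Hermitian
      have h1 := hP.matrix_transpose
      have h2 : (fun k => (T k)ᵀ) = T := funext fun k => by
        have hh := (hTps k).isHermitian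
        rwa [Matrix.IsHermitian, Matrix.conjTranspose_eq_transpose_of_trivial] at hh
      rw [h2] at h1
      rw [Matrix.IsHermitian, Matrix.conjTranspose_eq_transpose_of_trivial]
      exact h1.unique hP
    · -- positivity
      intro x hx
      have gadd : ∀ a b : Matrix (Fin n) (Fin n) ℝ,
          star x ⬝ᵥ (a + b) *ᵥ x = star x ⬝ᵥ a *ᵥ x + star x ⬝ᵥ b *ᵥ x := by
        intro a b; rw [Matrix.add_mulVec, dotProduct_add]
      have gcont : Continuous (fun Q : Matrix (Fin n) (Fin n) ℝ => star x ⬝ᵥ Q *ᵥ x) :=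
        continuous_const.dotProduct (continuous_id.matrix_mulVec continuous_const)
      have hg : HasSum (fun k => star x ⬝ᵥ (T k) *ᵥ x) (star x ⬝ᵥ (∑' k, T k) *ᵥ x) := by
        have hmap := hP.map
          (AddMonoidHom.mk' (fun Q : Matrix (Fin n) (Fin n) ℝ => star x ⬝ᵥ Q *ᵥ x) gadd) gcont
        simpa [Function.comp_def] using hmap
      have h0 : 0 < star x ⬝ᵥ (T 0) *ᵥ x := by rw [hT0]; exact hM.dotProduct_mulVec_pos hx
      have hle : star x ⬝ᵥ (T 0) *ᵥ x ≤ star x ⬝ᵥ (∑' k, T k) *ᵥ x := by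
        rw [← hg.tsum_eq]
        exact Summable.le_tsum hg.summable 0 (fun k _ => (hTps k).dotProduct_mulVec_nonneg x)
      exact h0.trans_le hle
    · -- Lyapunov equation
      have hstep : ∀ k, Aᵀ * T k * A = T (k + 1) := by
        intro k
        show Aᵀ * ((Aᵀ) ^ k * M * A ^ k) * A = (Aᵀ) ^ (k + 1) * M * A ^ (k + 1)
        rw [pow_succ' (Aᵀ) k, pow_succ A k]
        simp only [mul_assoc]
      have hmulA : Summable (fun k => T k * A) := hsum.mul_right A
      have h2 : Aᵀ * (∑' k, T k) * A = ∑' k, T (k + 1) := by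
        calc Aᵀ * (∑' k, T k) * A = Aᵀ * ((∑' k, T k) * A) := by rw [mul_assoc]
          _ = Aᵀ * (∑' k, T k * A) := by rw [hsum.tsum_mul_right A]
          _ = ∑' k, Aᵀ * (T k * A) := (hmulA.tsum_mul_left (Aᵀ)).symm
          _ = ∑' k, T (k + 1) := by
              congr 1; funext k; rw [← mul_assoc, hstep k]
      have h3 : (∑' k, T k) = M + ∑' k, T (k + 1) := by
        rw [Summable.tsum_eq_zero_add hsum, hT0]
      rw [h2, h3]
      abel
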